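/- arXiv:1605.04575 — 2 statements merged into one kernel-verified Lean document; each statement's English description precedes it below -/
import Mathlib

section
/- Let T be a subcubic tree with γ*_e(T) = γ*_{e,f}(T) > 1 and let D be a minimum porous exponential dominating set of T. Then w*_{(T,D)}(u) = 1 for every vertex u of degree 1 or 2 in T. -/
open SimpleGraph Finset

variable {V : Type*}

/-- `(1/2)^(d-1)` for an extended natural `d`, with value `0` at `∞`. -/
noncomputable def halfPow (d : ℕ∞) : ℝ :=
  if d = ⊤ then 0 else 2 * (1 / 2 : ℝ) ^ d.toNat

/-- `(1/2)^(dist_G(u,v)-1)` using the ordinary graph distance. -/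
noncomputable def expw (G : SimpleGraph V) (u v : V) : ℝ :=
  2 * (1 / 2 : ℝ) ^ G.dist u v

/-- The modified distance `dist_{(G,D)}(u,v)`: minimum length of a path from `u` to `v`
whose only vertex in `D` is the endvertex `v` (`∞` if no such path exists). -/
noncomputable def mdist (G : SimpleGraph V) (D : Finset V) (u v : V) : ℕ∞ :=
  sInf ((fun p : G.Walk u v => (p.length : ℕ∞)) ''
    {p | p.IsPath ∧ v ∈ D ∧ ∀ w ∈ p.support, w ∈ D → w = v})

/-- `w_{(G,D)}(u)`. -/
noncomputable def wblock (G : SimpleGraph V) (D : Finset V) (u : V) : ℝ :=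
  ∑ v ∈ D, halfPow (mdist G D u v)

/-- `w*_{(G,D)}(u)`. -/
noncomputable def wstar (G : SimpleGraph V) (D : Finset V) (u : V) : ℝ :=
  ∑ v ∈ D, expw G u v

def IsExpDomSet (G : SimpleGraph V) (D : Finset V) : Prop :=
  ∀ u : V, 1 ≤ wblock G D u

def IsPorousExpDomSet (G : SimpleGraph V) (D : Finset V) : Prop :=
  ∀ u : V, 1 ≤ wstar G D u

def IsDomSet (G : SimpleGraph V) (D : Finset V) : Prop :=
  ∀ v : V, v ∉ D → ∃ u ∈ D, G.Adj u v

/-- The exponential domination number `γ_e(G)`. -/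
noncomputable def gammaE (G : SimpleGraph V) [Fintype V] : ℕ :=
  sInf {k | ∃ D : Finset V, IsExpDomSet G D ∧ D.card = k}

/-- The porous exponential domination number `γ*_e(G)`. -/
noncomputable def gammaEStar (G : SimpleGraph V) [Fintype V] : ℕ :=
  sInf {k | ∃ D : Finset V, IsPorousExpDomSet G D ∧ D.card = k}

/-- The domination number `γ(G)`. -/
noncomputable def gammaDom (G : SimpleGraph V) [Fintype V] : ℕ :=
  sInf {k | ∃ D : Finset V, IsDomSet G D ∧ D.card = k}

/-- Feasibility for the LP relaxation of porous exponential domination. -/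
def FracFeasible (G : SimpleGraph V) [Fintype V] (x : V → ℝ) : Prop :=
  (∀ u, 0 ≤ x u) ∧ ∀ v : V, 1 ≤ ∑ u : V, expw G u v * x u

/-- The fractional porous exponential domination number `γ*_{e,f}(G)`. -/
noncomputable def gammaEF (G : SimpleGraph V) [Fintype V] : ℝ :=
  sInf {s | ∃ x : V → ℝ, FracFeasible G x ∧ s = ∑ u : V, x u}

/-- A graph is subcubic if all degrees are at most `3`. -/
def Subcubic (G : SimpleGraph V) [Fintype V] [DecidableRel G.Adj] : Prop :=
  ∀ v : V, G.degree v ≤ 3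




set_option linter.unusedSectionVars false

section TreeAux
variable {V : Type*} [DecidableEq V] {G : SimpleGraph V}


lemma aux_dist_le_support {w v u : V} {p : G.Walk w v} (hu : u ∈ p.support) :
    G.dist u v + (p.takeUntil u hu).length ≤ p.length := by
  have h := congr_arg Walk.length (p.take_spec hu)
  rw [Walk.length_append] at h
  have h2 := SimpleGraph.dist_le (p.dropUntil u hu)
  omega

lemma aux_tree_adj_dist (hT : G.IsTree) {u w v : V} (h : G.Adj u w)
    (hle : G.dist w v ≤ G.dist u v) : G.dist w v + 1 = G.dist u v := by
  obtain ⟨q, hq⟩ := hT.isConnected.exists_walk_length_eq_dist w v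
  have hqp : q.IsPath := q.isPath_of_length_eq_dist hq
  have hus : u ∉ q.support := by
    intro hus
    have h1 := aux_dist_le_support hus
    have h2 : (q.takeUntil u hus).length ≠ 0 := by
      intro h0
      exact h.ne' (Walk.eq_of_length_eq_zero h0)
    omega
  have hP : (Walk.cons h q).IsPath := hqp.cons hus
  obtain ⟨p₀, hp₀⟩ := hT.isConnected.exists_walk_length_eq_dist u v
  have hp₀p : p₀.IsPath := p₀.isPath_of_length_eq_dist hp₀
  have heq := hT.IsAcyclic.path_unique ⟨Walk.cons h q, hP⟩ ⟨p₀, hp₀p⟩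
  have hlen : (Walk.cons h q).length = p₀.length := congrArg (fun p : G.Path u v => p.1.length) heq
  rw [Walk.length_cons] at hlen
  omega

lemma aux_tree_closer_unique (hT : G.IsTree) {u v w₁ w₂ : V} (h₁ : G.Adj u w₁) (h₂ : G.Adj u w₂)
    (hd₁ : G.dist w₁ v + 1 = G.dist u v) (hd₂ : G.dist w₂ v + 1 = G.dist u v) : w₁ = w₂ := by
  obtain ⟨q₁, hq₁⟩ := hT.isConnected.exists_walk_length_eq_dist w₁ v
  obtain ⟨q₂, hq₂⟩ := hT.isConnected.exists_walk_length_eq_dist w₂ v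
  have hus₁ : u ∉ q₁.support := fun hus => by have := aux_dist_le_support hus; omega
  have hus₂ : u ∉ q₂.support := fun hus => by have := aux_dist_le_support hus; omega
  have hP₁ : (Walk.cons h₁ q₁).IsPath := (q₁.isPath_of_length_eq_dist hq₁).cons hus₁
  have hP₂ : (Walk.cons h₂ q₂).IsPath := (q₂.isPath_of_length_eq_dist hq₂).cons hus₂
  have heq := hT.IsAcyclic.path_unique ⟨Walk.cons h₁ q₁, hP₁⟩ ⟨Walk.cons h₂ q₂, hP₂⟩
  have hval : (Walk.cons h₁ q₁) = (Walk.cons h₂ q₂) := congrArg (fun p : G.Path u v => p.1) heq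
  have := congr_arg (fun p : G.Walk u v => p.getVert 1) hval
  simpa [Walk.getVert_cons] using this

lemma aux_exists_closer (hc : G.Connected) {u v : V} (hne : u ≠ v) :
    ∃ w, G.Adj u w ∧ G.dist w v + 1 = G.dist u v := by
  obtain ⟨p, hp⟩ := hc.exists_walk_length_eq_dist u v
  have hpos : 0 < G.dist u v := hc.pos_dist_of_ne hne
  cases p with
  | nil => rw [Walk.length_nil] at hp; omega
  | @cons _ w _ h q =>
    refine ⟨w, h, ?_⟩
    rw [Walk.length_cons] at hp
    have hle : G.dist w v ≤ q.length := SimpleGraph.dist_le q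
    obtain ⟨r, hr⟩ := hc.exists_walk_length_eq_dist w v
    have h2 : G.dist u v ≤ G.dist w v + 1 := by
      have := SimpleGraph.dist_le (Walk.cons h r)
      rwa [Walk.length_cons, hr] at this
    omega

lemma aux_tree_dichotomy (hT : G.IsTree) {u w v : V} (h : G.Adj u w) :
    G.dist w v + 1 = G.dist u v ∨ G.dist u v + 1 = G.dist w v := by
  rcases le_total (G.dist w v) (G.dist u v) with hle | hle
  · exact Or.inl (aux_tree_adj_dist hT h hle)
  · exact Or.inr (aux_tree_adj_dist hT h.symm hle)


lemma aux_inner_sum [Fintype V] [DecidableRel G.Adj] (hT : G.IsTree) (v : V) (c : V → ℝ) (u : V) :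
    (∑ w ∈ G.neighborFinset u, if G.dist w v + 1 = G.dist u v then c u else 0)
      = if u = v then 0 else c u := by
  by_cases huv : u = v
  · subst huv
    rw [if_pos rfl]
    apply Finset.sum_eq_zero
    intro w _
    rw [if_neg]
    rw [SimpleGraph.dist_self]
    omega
  · obtain ⟨w₀, hadj, hw₀⟩ := aux_exists_closer hT.isConnected huv
    rw [if_neg huv, Finset.sum_eq_single w₀]
    · rw [if_pos hw₀]
    · intro b hb hne
      rw [if_neg]
      intro hbd
      exact hne (aux_tree_closer_unique hT ((G.mem_neighborFinset u b).1 hb) hadj hbd hw₀)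
    · intro habs
      exact absurd ((G.mem_neighborFinset u w₀).2 hadj) habs

lemma aux_swap_sum [Fintype V] [DecidableRel G.Adj] (g : V → V → ℝ) :
    (∑ u : V, ∑ w ∈ G.neighborFinset u, g u w)
      = ∑ u : V, ∑ w ∈ G.neighborFinset u, g w u := by
  simp only [neighborFinset_eq_filter, Finset.sum_filter]
  rw [Finset.sum_comm]
  apply Finset.sum_congr rfl
  intro u _
  apply Finset.sum_congr rfl
  intro w _
  exact if_congr (G.adj_comm w u) rfl rfl

lemma tree_identity {V : Type*} [DecidableEq V] [Fintype V] (G : SimpleGraph V)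
    [DecidableRel G.Adj] (hT : G.IsTree) (v : V) :
    ∑ u : V, expw G u v * ((3 - (G.degree u : ℝ)) / 6) = 1 := by
  set f : V → ℝ := fun u => ((1 : ℝ)/2) ^ G.dist u v with hf
  have hfpos : ∀ u, 0 < f u := fun u => by positivity
  -- T = sum over adjacent ordered pairs
  have hdeg : ∀ u : V, (G.degree u : ℝ) * f u = ∑ w ∈ G.neighborFinset u, f u := by
    intro u
    rw [Finset.sum_const, ← G.card_neighborFinset_eq_degree, nsmul_eq_mul]
  have hsplit : ∀ u : V, (∑ w ∈ G.neighborFinset u, f u)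
      = (∑ w ∈ G.neighborFinset u, if G.dist w v + 1 = G.dist u v then f u else 0)
        + ∑ w ∈ G.neighborFinset u, if G.dist u v + 1 = G.dist w v then (2:ℝ) * f w else 0 := by
    intro u
    rw [← Finset.sum_add_distrib]
    apply Finset.sum_congr rfl
    intro w hw
    have hadj := (G.mem_neighborFinset u w).1 hw
    rcases aux_tree_dichotomy hT hadj with h | h
    · rw [if_pos h, if_neg (by omega), add_zero]
    · rw [if_neg (by omega), if_pos h, zero_add]
      have h2 : (2:ℝ) * f w = f u := by
        show (2:ℝ) * (1/2 : ℝ) ^ G.dist w v = (1/2 : ℝ) ^ G.dist u v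
        rw [← h, pow_succ]
        ring
      exact h2.symm
  have hsecond : (∑ u : V, ∑ w ∈ G.neighborFinset u, if G.dist u v + 1 = G.dist w v then (2:ℝ) * f w else 0)
      = ∑ u : V, ∑ w ∈ G.neighborFinset u, if G.dist w v + 1 = G.dist u v then (2:ℝ) * f u else 0 := by
    exact aux_swap_sum (fun u w => if G.dist u v + 1 = G.dist w v then (2:ℝ) * f w else 0)
  have hT' : (∑ u : V, (G.degree u : ℝ) * f u)
      = (∑ u : V, if u = v then 0 else f u) + ∑ u : V, if u = v then 0 else (2:ℝ) * f u := by
    calc (∑ u : V, (G.degree u : ℝ) * f u) = ∑ u : V, ∑ w ∈ G.neighborFinset u, f u := by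
          exact Finset.sum_congr rfl fun u _ => hdeg u
      _ = (∑ u : V, ∑ w ∈ G.neighborFinset u, if G.dist w v + 1 = G.dist u v then f u else 0)
          + ∑ u : V, ∑ w ∈ G.neighborFinset u, if G.dist u v + 1 = G.dist w v then (2:ℝ) * f w else 0 := by
          rw [← Finset.sum_add_distrib]
          exact Finset.sum_congr rfl fun u _ => hsplit u
      _ = _ := by
          rw [hsecond]
          congr 1
          · exact Finset.sum_congr rfl fun u _ => aux_inner_sum hT v f u
          · exact Finset.sum_congr rfl fun u _ => aux_inner_sum hT v (fun u => (2:ℝ) * f u) u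
  have hfv : f v = 1 := by rw [hf]; simp [SimpleGraph.dist_self]
  have hite : ∀ c : V → ℝ, (∑ u : V, if u = v then 0 else c u) = (∑ u : V, c u) - c v := by
    intro c
    have h1 : (∑ u : V, if u = v then c u else 0) = c v := by
      rw [Finset.sum_ite_eq' Finset.univ v c, if_pos (Finset.mem_univ v)]
    have h2 : (∑ u : V, c u) = (∑ u : V, if u = v then c u else 0) + ∑ u : V, if u = v then 0 else c u := by
      rw [← Finset.sum_add_distrib]
      apply Finset.sum_congr rfl
      intro u _
      by_cases h : u = v <;> simp [h]
    rw [h2, h1]; ring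
  have hdegsum : (∑ u : V, (G.degree u : ℝ) * f u) = 3 * (∑ u : V, f u) - 3 := by
    rw [hT', hite f, hite (fun u => (2:ℝ) * f u), ← Finset.mul_sum, hfv]
    ring
  have hexp : ∀ u : V, expw G u v * ((3 - (G.degree u : ℝ)) / 6)
      = f u - ((G.degree u : ℝ) * f u) / 3 := by
    intro u
    rw [expw, hf]
    ring
  rw [Finset.sum_congr rfl fun u _ => hexp u, Finset.sum_sub_distrib, ← Finset.sum_div, hdegsum]
  ring

end TreeAux


/-- If `T` is a subcubic tree with `γ*_e(T) = γ*_{e,f}(T) > 1` and `D` is a minimum porous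
exponential dominating set, then `w*_{(T,D)}(u) = 1` for every vertex `u` of degree 1 or 2. -/
theorem stmt_7 {V : Type*} [Fintype V] (G : SimpleGraph V) [DecidableRel G.Adj]
    (hT : G.IsTree) (hsub : Subcubic G)
    (heq : (gammaEStar G : ℝ) = gammaEF G) (hgt : 1 < gammaEStar G)
    (D : Finset V) (hD : IsPorousExpDomSet G D) (hmin : D.card = gammaEStar G)
    (u : V) (hu : G.degree u = 1 ∨ G.degree u = 2) :
    wstar G D u = 1 := by
  classical
  by_contra hne
  have h1 : 1 < wstar G D u := lt_of_le_of_ne (hD u) (Ne.symm hne)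
  set x₀ : V → ℝ := fun w => (3 - (G.degree w : ℝ)) / 6 with hx₀
  have hx₀nn : ∀ w, 0 ≤ x₀ w := by
    intro w
    have h3 : (G.degree w : ℝ) ≤ 3 := by exact_mod_cast hsub w
    rw [hx₀]
    simp only []
    linarith
  have hid : ∀ w, ∑ z : V, expw G z w * x₀ z = 1 := fun w => tree_identity G hT w
  have hfeas : FracFeasible G x₀ := ⟨hx₀nn, fun w => le_of_eq (hid w).symm⟩
  have hbdd : BddBelow {s | ∃ x : V → ℝ, FracFeasible G x ∧ s = ∑ u : V, x u} := by
    refine ⟨0, fun s hs => ?_⟩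
    obtain ⟨x, hx, rfl⟩ := hs
    exact Finset.sum_nonneg fun i _ => hx.1 i
  have hle : gammaEF G ≤ ∑ w : V, x₀ w := csInf_le hbdd ⟨x₀, hfeas, rfl⟩
  have hcard : (D.card : ℝ) = ∑ w : V, x₀ w * wstar G D w := by
    calc (D.card : ℝ) = ∑ _d ∈ D, (1 : ℝ) := by simp
      _ = ∑ d ∈ D, ∑ z : V, expw G z d * x₀ z := Finset.sum_congr rfl fun d _ => (hid d).symm
      _ = ∑ z : V, ∑ d ∈ D, expw G z d * x₀ z := Finset.sum_comm
      _ = ∑ w : V, x₀ w * wstar G D w := by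
          apply Finset.sum_congr rfl
          intro z _
          rw [wstar, Finset.mul_sum]
          apply Finset.sum_congr rfl
          intro d _
          ring
  have hx₀u : 0 < x₀ u := by
    rcases hu with h | h <;> · rw [hx₀]; simp only [h]; norm_num
  have hgtsum : ∑ w : V, x₀ w < (D.card : ℝ) := by
    rw [hcard]
    apply Finset.sum_lt_sum (f := fun w => x₀ w) (g := fun w => x₀ w * wstar G D w)
    · intro w _
      have := mul_le_mul_of_nonneg_left (hD w) (hx₀nn w)
      simpa using this
    · refine ⟨u, Finset.mem_univ u, ?_⟩
      have := mul_lt_mul_of_pos_left h1 hx₀u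
      simpa using this
  have hfin : gammaEF G < (gammaEStar G : ℝ) := by
    apply lt_of_le_of_lt hle
    rw [← hmin]
    exact_mod_cast hgtsum
  rw [heq] at hfin
  exact lt_irrefl _ hfin
end

section
/- If G is a connected graph of order n, maximum degree Δ ≥ 4, and diameter d, then γ*_{e,f}(G) ≥ n · ((Δ-1)/2 - 1) / (Δ·((Δ-1)/2)^d - 3). -/
open SimpleGraph Finset

variable {V : Type*}

/-- vertices at distance exactly `i` from `u`. -/
noncomputable def sph (G : SimpleGraph V) [Fintype V] (u : V) (i : ℕ) : Finset V :=
  @Finset.filter _ (fun v => G.dist u v = i) (Classical.decPred _) Finset.univ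

lemma mem_sph [Fintype V] {G : SimpleGraph V} {u v : V} {i : ℕ} :
    v ∈ sph G u i ↔ G.dist u v = i := by
  simp [sph, Finset.mem_filter]

lemma pred_exists {G : SimpleGraph V} (hc : G.Connected) {u v : V} {i : ℕ}
    (hd : G.dist u v = i + 1) : ∃ w, G.Adj w v ∧ G.dist u w = i := by
  have h0 : G.dist v u = i + 1 := by rw [SimpleGraph.dist_comm]; exact hd
  obtain ⟨p, hp⟩ := SimpleGraph.exists_walk_of_dist_ne_zero (G := G) (u := v) (v := u)
    (by rw [h0]; omega)
  rw [h0] at hp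
  cases p with
  | nil => simp at hp
  | @cons _ x _ h q =>
    refine ⟨x, h.symm, ?_⟩
    simp only [SimpleGraph.Walk.length_cons] at hp
    have hq : q.length = i := by omega
    have h1 : G.dist u x ≤ i := by
      have := SimpleGraph.dist_le q.reverse
      simpa [hq] using this
    have h2 : G.dist x v ≤ 1 := by
      simpa using SimpleGraph.dist_le h.symm.toWalk
    have h3 : G.dist u v ≤ G.dist u x + G.dist x v := hc.dist_triangle
    omega

lemma sph_zero_card [Fintype V] {G : SimpleGraph V} (hc : G.Connected) (u : V) :
    (sph G u 0).card ≤ 1 := by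
  refine Finset.card_le_one.mpr (fun a ha b hb => ?_)
  rw [mem_sph, hc.dist_eq_zero_iff] at ha hb
  rw [← ha, ← hb]

lemma sph_one_card [Fintype V] {G : SimpleGraph V} [DecidableRel G.Adj] (u : V) :
    (sph G u 1).card ≤ G.maxDegree := by
  have hsub : sph G u 1 ⊆ G.neighborFinset u := by
    intro v hv
    rw [mem_sph, SimpleGraph.dist_eq_one_iff_adj] at hv
    simpa using hv
  calc (sph G u 1).card ≤ (G.neighborFinset u).card := Finset.card_le_card hsub
    _ = G.degree u := (G.card_neighborFinset_eq_degree u)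
    _ ≤ G.maxDegree := G.degree_le_maxDegree u

lemma sph_step [Fintype V] {G : SimpleGraph V} [DecidableRel G.Adj] (hc : G.Connected)
    (u : V) (i : ℕ) (hi : 1 ≤ i) :
    (sph G u (i + 1)).card ≤ (G.maxDegree - 1) * (sph G u i).card := by
  classical
  have hsub : sph G u (i+1) ⊆
      (sph G u i).biUnion (fun w => G.neighborFinset w ∩ sph G u (i+1)) := by
    intro v hv
    rw [mem_sph] at hv
    obtain ⟨w, hadj, hw⟩ := pred_exists hc hv
    rw [Finset.mem_biUnion]
    exact ⟨w, mem_sph.mpr hw, Finset.mem_inter.mpr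
      ⟨by simpa using hadj, mem_sph.mpr hv⟩⟩
  calc (sph G u (i+1)).card
      ≤ ((sph G u i).biUnion (fun w => G.neighborFinset w ∩ sph G u (i+1))).card :=
        Finset.card_le_card hsub
    _ ≤ ∑ w ∈ sph G u i, (G.neighborFinset w ∩ sph G u (i+1)).card :=
        Finset.card_biUnion_le
    _ ≤ ∑ w ∈ sph G u i, (G.maxDegree - 1) := by
        refine Finset.sum_le_sum (fun w hw => ?_)
        rw [mem_sph] at hw
        obtain ⟨j, rfl⟩ : ∃ j, i = j + 1 := ⟨i - 1, by omega⟩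
        obtain ⟨w', hadj', hw'⟩ := pred_exists hc hw
        have hsub2 : G.neighborFinset w ∩ sph G u (j+1+1) ⊆
            (G.neighborFinset w).erase w' := by
          intro a ha
          rw [Finset.mem_inter] at ha
          refine Finset.mem_erase.mpr ⟨?_, ha.1⟩
          intro h
          subst h
          rw [mem_sph] at ha
          omega
        calc (G.neighborFinset w ∩ sph G u (j+1+1)).card
            ≤ ((G.neighborFinset w).erase w').card := Finset.card_le_card hsub2
          _ = (G.neighborFinset w).card - 1 :=
              Finset.card_erase_of_mem (by simpa using hadj'.symm)
          _ ≤ G.maxDegree - 1 := by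
              rw [G.card_neighborFinset_eq_degree]
              exact Nat.sub_le_sub_right (G.degree_le_maxDegree w) 1
    _ = (G.maxDegree - 1) * (sph G u i).card := by
        rw [Finset.sum_const, smul_eq_mul, mul_comm]

lemma sph_card_bound [Fintype V] {G : SimpleGraph V} [DecidableRel G.Adj] (hc : G.Connected)
    (u : V) (i : ℕ) :
    (sph G u (i + 1)).card ≤ G.maxDegree * (G.maxDegree - 1) ^ i := by
  induction i with
  | zero => simpa using sph_one_card u
  | succ j ih =>
      calc (sph G u (j + 1 + 1)).card ≤ (G.maxDegree - 1) * (sph G u (j+1)).card :=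
            sph_step hc u (j+1) (by omega)
        _ ≤ (G.maxDegree - 1) * (G.maxDegree * (G.maxDegree - 1) ^ j) :=
            Nat.mul_le_mul_left _ ih
        _ = G.maxDegree * (G.maxDegree - 1) ^ (j+1) := by ring

lemma ediam_ne_top' [Fintype V] {G : SimpleGraph V} (hc : G.Connected) : G.ediam ≠ ⊤ := by
  have hle : G.ediam ≤ (Fintype.card V : ℕ∞) := by
    refine SimpleGraph.ediam_le_of_edist_le (fun a b => ?_)
    obtain ⟨p⟩ := hc a b
    classical
    calc G.edist a b ≤ ((p.toPath : G.Walk a b).length : ℕ∞) := SimpleGraph.edist_le _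
      _ ≤ (Fintype.card V : ℕ∞) := by
          exact_mod_cast Nat.cast_le.mpr (p.toPath.2.length_lt).le
  exact ne_top_of_le_ne_top (by simp) hle

lemma sum_expw_bound [Fintype V] {G : SimpleGraph V} [DecidableRel G.Adj] (hc : G.Connected)
    {Δ : ℕ} (hΔ : G.maxDegree = Δ) (h4 : 4 ≤ Δ) (u : V) :
    ∑ v : V, expw G u v ≤
      ((Δ : ℝ) * (((Δ : ℝ) - 1) / 2) ^ G.diam - 3) / ((((Δ : ℝ) - 1) / 2) - 1) := by
  classical
  set d := G.diam with hd
  set q : ℝ := ((Δ : ℝ) - 1) / 2 with hqdef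
  have hΔ4 : (4 : ℝ) ≤ (Δ : ℝ) := by exact_mod_cast h4
  have hq : (3 : ℝ) / 2 ≤ q := by rw [hqdef]; linarith
  have hq1 : q ≠ 1 := by linarith
  have hq0 : (0 : ℝ) < q - 1 := by linarith
  have hdist : ∀ v : V, G.dist u v ≤ d := fun v =>
    SimpleGraph.dist_le_diam (ediam_ne_top' hc)
  -- partition into spheres
  have huniv : (Finset.univ : Finset V) =
      (Finset.range (d + 1)).biUnion (fun i => sph G u i) := by
    ext v
    simp only [Finset.mem_univ, Finset.mem_biUnion, Finset.mem_range, Nat.lt_succ_iff,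
      mem_sph, true_iff]
    exact ⟨G.dist u v, hdist v, rfl⟩
  have hdisj : ∀ i ∈ Finset.range (d+1), ∀ j ∈ Finset.range (d+1), i ≠ j →
      Disjoint (sph G u i) (sph G u j) := by
    intro i _ j _ hij
    refine Finset.disjoint_left.mpr (fun a ha hb => ?_)
    rw [mem_sph] at ha hb
    omega
  have hsplit : ∑ v : V, expw G u v =
      ∑ i ∈ Finset.range (d + 1), ((sph G u i).card : ℝ) * (2 * (1/2 : ℝ) ^ i) := by
    rw [huniv, Finset.sum_biUnion hdisj]
    refine Finset.sum_congr rfl (fun i _ => ?_)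
    have hval : ∀ v ∈ sph G u i, expw G u v = 2 * (1/2 : ℝ) ^ i := by
      intro v hv
      simp only [expw, mem_sph.mp hv]
    rw [Finset.sum_congr rfl hval, Finset.sum_const, nsmul_eq_mul]
  rw [hsplit, Finset.sum_range_succ']
  -- bound the i = 0 term and the rest
  have h0 : ((sph G u 0).card : ℝ) * (2 * (1/2 : ℝ) ^ 0) ≤ 2 := by
    have := sph_zero_card hc u
    have h01 : ((sph G u 0).card : ℝ) ≤ 1 := by exact_mod_cast this
    nlinarith
  have hterm : ∀ i, ((sph G u (i+1)).card : ℝ) * (2 * (1/2 : ℝ) ^ (i+1)) ≤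
      (Δ : ℝ) * q ^ i := by
    intro i
    have hb := sph_card_bound hc u i
    rw [hΔ] at hb
    have hb' : ((sph G u (i+1)).card : ℝ) ≤ (Δ : ℝ) * ((Δ : ℝ) - 1) ^ i := by
      have : ((Δ * (Δ - 1) ^ i : ℕ) : ℝ) = (Δ : ℝ) * ((Δ : ℝ) - 1) ^ i := by
        push_cast [Nat.cast_sub (by omega : 1 ≤ Δ)]
        ring
      calc ((sph G u (i+1)).card : ℝ) ≤ ((Δ * (Δ - 1) ^ i : ℕ) : ℝ) := by exact_mod_cast hb
        _ = _ := this
    have hpos : (0 : ℝ) ≤ 2 * (1/2 : ℝ) ^ (i+1) := by positivity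
    calc ((sph G u (i+1)).card : ℝ) * (2 * (1/2 : ℝ) ^ (i+1))
        ≤ ((Δ : ℝ) * ((Δ : ℝ) - 1) ^ i) * (2 * (1/2 : ℝ) ^ (i+1)) :=
          mul_le_mul_of_nonneg_right hb' hpos
      _ = (Δ : ℝ) * q ^ i := by
          rw [hqdef, div_pow]
          rw [div_pow, one_pow, pow_succ]
          field_simp
  have hsum : ∑ i ∈ Finset.range d, ((sph G u (i+1)).card : ℝ) * (2 * (1/2 : ℝ) ^ (i+1)) ≤
      (Δ : ℝ) * ∑ i ∈ Finset.range d, q ^ i := by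
    rw [Finset.mul_sum]
    exact Finset.sum_le_sum (fun i _ => hterm i)
  have hgeom : ∑ i ∈ Finset.range d, q ^ i = (q ^ d - 1) / (q - 1) := geom_sum_eq hq1 d
  have hfinal : (Δ : ℝ) * ((q ^ d - 1) / (q - 1)) + 2 =
      ((Δ : ℝ) * q ^ d - 3) / (q - 1) := by
    field_simp
    rw [hqdef]
    ring
  calc (∑ i ∈ Finset.range d, ((sph G u (i+1)).card : ℝ) * (2 * (1/2 : ℝ) ^ (i+1))) +
        ((sph G u 0).card : ℝ) * (2 * (1/2 : ℝ) ^ 0)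
      ≤ (Δ : ℝ) * ∑ i ∈ Finset.range d, q ^ i + 2 := add_le_add hsum h0
    _ = ((Δ : ℝ) * q ^ d - 3) / (q - 1) := by rw [hgeom]; exact hfinal

/-- If `G` is connected of order `n`, maximum degree `Δ ≥ 4`, and diameter `d`, then
`γ*_{e,f}(G) ≥ n ((Δ-1)/2 - 1) / (Δ ((Δ-1)/2)^d - 3)`. -/
theorem stmt_13 {V : Type*} [Fintype V] (G : SimpleGraph V) [DecidableRel G.Adj]
    (hc : G.Connected) (Δ : ℕ) (hΔ : G.maxDegree = Δ) (h4 : 4 ≤ Δ) :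
    (Fintype.card V : ℝ) * (((Δ : ℝ) - 1) / 2 - 1) /
        ((Δ : ℝ) * (((Δ : ℝ) - 1) / 2) ^ G.diam - 3) ≤ gammaEF G := by
  classical
  have hV : Nonempty V := hc.nonempty
  set d := G.diam with hd
  set q : ℝ := ((Δ : ℝ) - 1) / 2 with hqdef
  have hΔ4 : (4 : ℝ) ≤ (Δ : ℝ) := by exact_mod_cast h4
  have hq0 : (0 : ℝ) < q - 1 := by rw [hqdef]; linarith
  have hqd : (1 : ℝ) ≤ q ^ d := one_le_pow₀ (by rw [hqdef]; linarith)
  have hC : (0 : ℝ) < (Δ : ℝ) * q ^ d - 3 := by nlinarith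
  have hfeas : FracFeasible G (fun _ => 1) := by
    refine ⟨fun _ => zero_le_one, fun v => ?_⟩
    have h2 : expw G v v * 1 ≤ ∑ u : V, expw G u v * 1 :=
      Finset.single_le_sum (f := fun u => expw G u v * 1)
        (fun u _ => by unfold expw; positivity) (Finset.mem_univ v)
    have h3 : expw G v v = 2 := by simp [expw, SimpleGraph.dist_self]
    rw [h3] at h2
    linarith
  unfold gammaEF
  refine le_csInf ⟨∑ _u : V, (1 : ℝ), ⟨fun _ => 1, hfeas, rfl⟩⟩ ?_
  rintro s ⟨x, ⟨hx0, hx1⟩, rfl⟩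
  have key : ∀ u : V, ∑ v : V, expw G u v ≤ ((Δ : ℝ) * q ^ d - 3) / (q - 1) :=
    fun u => sum_expw_bound hc hΔ h4 u
  have hn : (Fintype.card V : ℝ) ≤ (((Δ : ℝ) * q ^ d - 3) / (q - 1)) * ∑ u : V, x u := by
    calc (Fintype.card V : ℝ) = ∑ _v : V, (1 : ℝ) := by simp
      _ ≤ ∑ v : V, ∑ u : V, expw G u v * x u := Finset.sum_le_sum (fun v _ => hx1 v)
      _ = ∑ u : V, (∑ v : V, expw G u v) * x u := by
          rw [Finset.sum_comm]
          exact Finset.sum_congr rfl (fun u _ => (Finset.sum_mul _ _ _).symm)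
      _ ≤ ∑ u : V, (((Δ : ℝ) * q ^ d - 3) / (q - 1)) * x u :=
          Finset.sum_le_sum (fun u _ => mul_le_mul_of_nonneg_right (key u) (hx0 u))
      _ = _ := (Finset.mul_sum _ _ _).symm
  rw [div_le_iff₀ hC]
  have h2 := mul_le_mul_of_nonneg_right hn hq0.le
  rw [div_mul_eq_mul_div, div_mul_cancel₀ _ hq0.ne'] at h2
  have h3 := mul_comm (∑ u : V, x u) ((Δ : ℝ) * q ^ d - 3)
  linarith
end
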